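/- arXiv:2504.16496 — 2 statements merged into one kernel-verified Lean document; each statement's English description precedes it below -/
import Mathlib

section
/- (Bolzano–Poincaré–Miranda theorem.) Let n ≥ 1 and let F = (f_1, …, f_n) : [0,1]^n → ℝ^n be continuous. Suppose that for every k ∈ {1, …, n}: f_k(x) ≥ 0 for all x ∈ [0,1]^n with x_k = 0, and f_k(x) ≤ 0 for all x ∈ [0,1]^n with x_k = 1. Then there exists at least one x ∈ [0,1]^n with F(x) = 0. -/
open Set

namespace PM

open Finset

attribute [local instance] Classical.propDecidable

/-- A Kuhn simplex in the grid `{0,…,N}^m`: a base point with coordinates `< N`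
and a permutation giving the order in which coordinates are incremented. -/
abbrev Spx (m N : ℕ) := (Fin m → Fin N) × Equiv.Perm (Fin m)

/-- The `j`-th vertex of a Kuhn simplex (`j` ranges over `0,…,m`). -/
def vert {m N : ℕ} (s : Spx m N) (j : ℕ) : Fin m → ℕ :=
  fun i => (s.1 i : ℕ) + if ((s.2⁻¹ i : Fin m) : ℕ) < j then 1 else 0

lemma vert_le {m N : ℕ} (s : Spx m N) (j : ℕ) (i : Fin m) : vert s j i ≤ N := by
  have := (s.1 i).isLt
  unfold vert; split <;> omega

/-- The facet obtained by dropping vertex `j` carries all labels `1,…,m`. -/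
def good {m N : ℕ} (ℓ : (Fin m → ℕ) → ℕ) (s : Spx m N) (j : Fin (m+1)) : Prop :=
  ∀ t ∈ Finset.Icc 1 m, ∃ k : Fin (m+1), k ≠ j ∧ ℓ (vert s k) = t

/-- The simplex carries all labels `1,…,m+1`. -/
def full {m N : ℕ} (ℓ : (Fin m → ℕ) → ℕ) (s : Spx m N) : Prop :=
  ∀ t ∈ Finset.Icc 1 (m+1), ∃ k : Fin (m+1), ℓ (vert s k) = t

lemma card_Icc_one (m : ℕ) : (Finset.Icc 1 m).card = m := by
  rw [Nat.card_Icc]; omega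

/-- Per-simplex counting: a full simplex has exactly one good facet. -/
lemma cardgood_of_full {m N : ℕ} {ℓ : (Fin m → ℕ) → ℕ} {s : Spx m N}
    (hC : ∀ k : Fin (m+1), ℓ (vert s k) ∈ Finset.Icc 1 (m+1))
    (hfull : full ℓ s) :
    (Finset.univ.filter (good ℓ s)).card = 1 := by
  have hcards : (Finset.univ : Finset (Fin (m+1))).card = (Finset.Icc 1 (m+1)).card := by
    simp [card_Icc_one]
  have hinj : ∀ ⦃a₁ : Fin (m+1)⦄, a₁ ∈ Finset.univ → ∀ ⦃a₂ : Fin (m+1)⦄, a₂ ∈ Finset.univ →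
      ℓ (vert s a₁) = ℓ (vert s a₂) → a₁ = a₂ := by
    refine Finset.inj_on_of_surj_on_of_card_le (fun (a : Fin (m+1)) (_ : a ∈ Finset.univ) => ℓ (vert s a)) (fun a _ => hC a)
      (fun b hb => ?_) hcards.le
    obtain ⟨k, hk⟩ := hfull b hb
    exact ⟨k, Finset.mem_univ k, hk⟩
  obtain ⟨j₀, hj₀⟩ := hfull (m+1) (by simp)
  have hgood : Finset.univ.filter (good ℓ s) = {j₀} := by
    ext j
    simp only [Finset.mem_filter, Finset.mem_univ, true_and, Finset.mem_singleton]
    constructor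
    · intro hg
      by_contra hne
      have hLj : ℓ (vert s j) ∈ Finset.Icc 1 (m+1) := hC j
      have hLj' : ℓ (vert s j) ≠ m + 1 := fun h => hne (hinj (Finset.mem_univ j) (Finset.mem_univ j₀) (h.trans hj₀.symm))
      have : ℓ (vert s j) ∈ Finset.Icc 1 m := by
        simp only [Finset.mem_Icc] at hLj ⊢; omega
      obtain ⟨k, hkj, hk⟩ := hg _ this
      exact hkj (hinj (Finset.mem_univ k) (Finset.mem_univ j) (hk.trans rfl))
    · rintro rfl
      intro t ht
      obtain ⟨k, hk⟩ := hfull t (by simp only [Finset.mem_Icc] at ht ⊢; omega)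
      refine ⟨k, fun h => ?_, hk⟩
      subst h
      rw [hj₀] at hk
      simp only [Finset.mem_Icc] at ht; omega
  rw [hgood, Finset.card_singleton]

/-- Per-simplex counting: a non-full simplex has `0` or `2` good facets. -/
lemma cardgood_of_not_full {m N : ℕ} {ℓ : (Fin m → ℕ) → ℕ} {s : Spx m N}
    (hC : ∀ k : Fin (m+1), ℓ (vert s k) ∈ Finset.Icc 1 (m+1))
    (hfull : ¬ full ℓ s) :
    (Finset.univ.filter (good ℓ s)).card = 0 ∨ (Finset.univ.filter (good ℓ s)).card = 2 := by
  by_cases hB : ∀ t ∈ Finset.Icc 1 m, ∃ k : Fin (m+1), ℓ (vert s k) = t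
  · -- all small labels attained; m+1 not attained; a collision exists
    right
    have hnot : ∀ k : Fin (m+1), ℓ (vert s k) ≠ m + 1 := by
      intro k hk
      apply hfull
      intro t ht
      rcases Finset.mem_Icc.1 ht with ⟨ht1, ht2⟩
      rcases Nat.lt_or_ge t (m+1) with h | h
      · exact hB t (Finset.mem_Icc.2 ⟨ht1, by omega⟩)
      · exact ⟨k, by omega⟩
    have hmaps : ∀ k : Fin (m+1), k ∈ Finset.univ → ℓ (vert s k) ∈ Finset.Icc 1 m := by
      intro k _
      have := hC k
      have := hnot k
      simp only [Finset.mem_Icc] at *; omega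
    obtain ⟨a, _, b, _, hab, hLab⟩ :=
      Finset.exists_ne_map_eq_of_card_lt_of_maps_to (by simp [card_Icc_one]) hmaps
    have hgood : Finset.univ.filter (good ℓ s) = {a, b} := by
      ext j
      simp only [Finset.mem_filter, Finset.mem_univ, true_and, Finset.mem_insert,
        Finset.mem_singleton]
      constructor
      · intro hg
        -- L is injective on univ.erase j
        have hinj : ∀ ⦃a₁ : Fin (m+1)⦄, a₁ ∈ Finset.univ.erase j →
            ∀ ⦃a₂ : Fin (m+1)⦄, a₂ ∈ Finset.univ.erase j → ℓ (vert s a₁) = ℓ (vert s a₂) → a₁ = a₂ := by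
          refine Finset.inj_on_of_surj_on_of_card_le
            (fun (a : Fin (m+1)) (_ : a ∈ Finset.univ.erase j) => ℓ (vert s a))
            (fun a ha => hmaps a (Finset.mem_univ a)) (fun t ht => ?_) ?_
          · obtain ⟨k, hkj, hk⟩ := hg t ht
            exact ⟨k, Finset.mem_erase.2 ⟨hkj, Finset.mem_univ k⟩, hk⟩
          · simp [card_Icc_one]
        by_contra hcon
        push_neg at hcon
        have ha : a ∈ Finset.univ.erase j :=
          Finset.mem_erase.2 ⟨fun h => hcon.1 h.symm, Finset.mem_univ a⟩
        have hb : b ∈ Finset.univ.erase j :=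
          Finset.mem_erase.2 ⟨fun h => hcon.2 h.symm, Finset.mem_univ b⟩
        exact hab (hinj ha hb hLab)
      · intro hj t ht
        obtain ⟨k, hk⟩ := hB t ht
        rcases hj with rfl | rfl
        · by_cases hkj : k = j
          · exact ⟨b, Ne.symm hab, by rw [← hLab, ← hkj]; exact hk⟩
          · exact ⟨k, hkj, hk⟩
        · by_cases hkj : k = j
          · exact ⟨a, hab, by rw [hLab, ← hkj]; exact hk⟩
          · exact ⟨k, hkj, hk⟩
    rw [hgood, Finset.card_insert_of_notMem (by simpa using hab), Finset.card_singleton]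
  · left
    push_neg at hB
    obtain ⟨t, ht, hnone⟩ := hB
    rw [Finset.card_eq_zero, Finset.filter_eq_empty_iff]
    intro j _
    intro hg
    obtain ⟨k, _, hk⟩ := hg t ht
    exact hnone k hk


variable {m N : ℕ}

/-- The pivot (reflection through a facet) map on "doors" (simplex, dropped-vertex). -/
def piv (z : Spx (m+1) N × Fin (m+2)) : Spx (m+1) N × Fin (m+2) :=
  let p := z.1.1; let π := z.1.2; let j := z.2
  if hj0 : (j : ℕ) = 0 then
    if hp : ((p (π 0) : ℕ) + 1) < N then
      ((Function.update p (π 0) ⟨(p (π 0) : ℕ) + 1, hp⟩, π * finRotate (m+1)), Fin.last (m+1))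
    else z
  else if hjl : (j : ℕ) = m + 1 then
    if hp : (p (π (Fin.last m)) : ℕ) ≠ 0 then
      ((Function.update p (π (Fin.last m))
          ⟨(p (π (Fin.last m)) : ℕ) - 1, by have := (p (π (Fin.last m))).isLt; omega⟩,
        π * (finRotate (m+1))⁻¹), 0)
    else z
  else
    ((p, π * Equiv.swap (⟨(j : ℕ) - 1, by have := j.isLt; omega⟩ : Fin (m+1))
        (⟨(j : ℕ), by have := j.isLt; omega⟩ : Fin (m+1))), j)

/-- Vertices away from the dropped one are unchanged by a middle pivot. -/
lemma vert_swap (p : Fin (m+1) → Fin N) (π : Equiv.Perm (Fin (m+1)))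
    (a b : Fin (m+1)) (hab : (a : ℕ) + 1 = (b : ℕ)) (k : ℕ) (hk : k ≠ (b : ℕ)) :
    vert (p, π * Equiv.swap a b) k = vert (p, π) k := by
  funext i
  unfold vert
  simp only [mul_inv_rev, Equiv.Perm.mul_apply]
  have hswap : ((Equiv.swap a b)⁻¹ (π⁻¹ i) : ℕ) < k ↔ ((π⁻¹ i : Fin (m+1)) : ℕ) < k := by
    rw [Equiv.swap_inv]
    rcases eq_or_ne (π⁻¹ i) a with h | h
    · rw [h, Equiv.swap_apply_left]; omega
    · rcases eq_or_ne (π⁻¹ i) b with h2 | h2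
      · rw [h2, Equiv.swap_apply_right]; omega
      · rw [Equiv.swap_apply_of_ne_of_ne h h2]
  congr 1
  simp only [hswap]

/-- The bottom pivot shifts vertex indices down by one. -/
lemma vert_rot (p : Fin (m+1) → Fin N) (π : Equiv.Perm (Fin (m+1)))
    (hp : ((p (π 0) : ℕ) + 1) < N) (k : ℕ) (hk : k ≤ m) :
    vert (Function.update p (π 0) ⟨(p (π 0) : ℕ) + 1, hp⟩, π * finRotate (m+1)) k
      = vert (p, π) (k + 1) := by
  funext i
  unfold vert
  simp only [mul_inv_rev, Equiv.Perm.mul_apply]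
  have hrot : (finRotate (m+1))⁻¹ (π⁻¹ i) = π⁻¹ i - 1 := by
    rw [Equiv.Perm.inv_eq_iff_eq, finRotate_succ_apply, sub_add_cancel]
  rw [hrot]
  rcases eq_or_ne (π⁻¹ i) 0 with h0 | h0
  · have hi : i = π 0 := by rw [← h0, Equiv.Perm.coe_inv, Equiv.apply_symm_apply]
    have hupd : Function.update p (π 0) ⟨(p (π 0) : ℕ) + 1, hp⟩ i = ⟨(p (π 0) : ℕ) + 1, hp⟩ := by
      rw [hi, Function.update_self]
    rw [hupd, h0, hi]
    have : ((0 - 1 : Fin (m+1)) : ℕ) = m := by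
      rw [Fin.coe_sub_one, if_pos rfl]
    rw [this]
    simp only [Fin.val_zero]
    have h1 : ¬ (m < k) := by omega
    have h2 : 0 < k + 1 := by omega
    rw [if_neg h1]; simp [h2]
  · have hi : i ≠ π 0 := fun h => h0 (by rw [h, Equiv.Perm.coe_inv, Equiv.symm_apply_apply])
    rw [Function.update_of_ne hi]
    have hv : ((π⁻¹ i - 1 : Fin (m+1)) : ℕ) = ((π⁻¹ i : Fin (m+1)) : ℕ) - 1 := by
      rw [Fin.coe_sub_one, if_neg h0]
    rw [hv]
    have hpos : 0 < ((π⁻¹ i : Fin (m+1)) : ℕ) := by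
      rcases Nat.eq_zero_or_pos ((π⁻¹ i : Fin (m+1)) : ℕ) with h | h
      · exact absurd (Fin.ext h) h0
      · exact h
    congr 1
    by_cases hc : ((π⁻¹ i : Fin (m+1)) : ℕ) - 1 < k
    · rw [if_pos hc, if_pos (by omega)]
    · rw [if_neg hc, if_neg (by omega)]

lemma piv_invol (z : Spx (m+1) N × Fin (m+2)) : piv (piv z) = z := by
  obtain ⟨⟨p, π⟩, j⟩ := z
  by_cases hj0 : (j : ℕ) = 0
  · by_cases hp : ((p (π 0) : ℕ) + 1) < N
    · have h1 : piv ((p, π), j) =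
        ((Function.update p (π 0) ⟨(p (π 0) : ℕ) + 1, hp⟩, π * finRotate (m+1)), Fin.last (m+1)) := by
        unfold piv; simp only [dif_pos hj0, dif_pos hp]
      rw [h1]
      set p' := Function.update p (π 0) ⟨(p (π 0) : ℕ) + 1, hp⟩ with hp'
      set π' := π * finRotate (m+1) with hπ'
      have hlast : ((Fin.last (m+1) : Fin (m+2)) : ℕ) = m + 1 := rfl
      have hπ'l : π' (Fin.last m) = π 0 := by
        rw [hπ', Equiv.Perm.mul_apply, finRotate_succ_apply, Fin.last_add_one]
      have hp'v : (p' (π' (Fin.last m)) : ℕ) = (p (π 0) : ℕ) + 1 := by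
        rw [hπ'l, hp', Function.update_self]
      have hne : (p' (π' (Fin.last m)) : ℕ) ≠ 0 := by omega
      unfold piv
      dsimp only
      rw [dif_neg (by simp [hlast] : ¬ ((Fin.last (m+1) : Fin (m+2)) : ℕ) = 0),
        dif_pos (hlast : ((Fin.last (m+1) : Fin (m+2)) : ℕ) = m + 1), dif_pos hne]
      congr 1
      · congr 1
        · funext i
          rcases eq_or_ne i (π 0) with rfl | hi
          · have h2 : Function.update p' (π' (Fin.last m))
                (⟨(p' (π' (Fin.last m)) : ℕ) - 1, by have := (p' (π' (Fin.last m))).isLt; omega⟩ : Fin N) (π 0)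
                = ⟨(p' (π' (Fin.last m)) : ℕ) - 1, by have := (p' (π' (Fin.last m))).isLt; omega⟩ :=
              (congrArg _ hπ'l).symm.trans (Function.update_self _ _ _)
            refine h2.trans ?_
            apply Fin.ext
            simp only [hp'v]
            omega
          · have h2 : i ≠ π' (Fin.last m) := by rw [hπ'l]; exact hi
            rw [Function.update_of_ne h2, hp', Function.update_of_ne hi]
        · rw [hπ', mul_inv_cancel_right]
      · exact (Fin.ext hj0.symm : (0 : Fin (m+2)) = j)
    · unfold piv
      rw [dif_pos hj0, dif_neg hp, dif_pos hj0, dif_neg hp]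
  · by_cases hjl : (j : ℕ) = m + 1
    · by_cases hp : (p (π (Fin.last m)) : ℕ) ≠ 0
      · have h1 : piv ((p, π), j) =
          ((Function.update p (π (Fin.last m))
            ⟨(p (π (Fin.last m)) : ℕ) - 1, by have := (p (π (Fin.last m))).isLt; omega⟩,
            π * (finRotate (m+1))⁻¹), 0) := by
          unfold piv; simp only [dif_neg hj0, dif_pos hjl, dif_pos hp]
        rw [h1]
        set q := π (Fin.last m) with hq
        set p'' := Function.update p q ⟨(p q : ℕ) - 1, by have := (p q).isLt; omega⟩ with hp''
        set π'' := π * (finRotate (m+1))⁻¹ with hπ''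
        have hrot0 : (finRotate (m+1))⁻¹ (0 : Fin (m+1)) = Fin.last m := by
          rw [Equiv.Perm.inv_eq_iff_eq, finRotate_succ_apply, Fin.last_add_one]
        have hπ''0 : π'' 0 = q := by
          rw [hπ'', Equiv.Perm.mul_apply, hrot0]
        have hpv : (p'' (π'' 0) : ℕ) = (p q : ℕ) - 1 := by
          rw [hπ''0, hp'', Function.update_self]
        have hplt : ((p'' (π'' 0) : ℕ) + 1) < N := by
          rw [hpv]; have := (p q).isLt; omega
        unfold piv
        dsimp only
        rw [dif_pos (show ((0 : Fin (m+2)) : ℕ) = 0 from Fin.val_zero _), dif_pos hplt]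
        congr 1
        · congr 1
          · funext i
            rcases eq_or_ne i q with rfl | hi
            · have h2 : Function.update p'' (π'' 0)
                  (⟨(p'' (π'' 0) : ℕ) + 1, hplt⟩ : Fin N) q = ⟨(p'' (π'' 0) : ℕ) + 1, hplt⟩ :=
              (congrArg _ hπ''0).symm.trans (Function.update_self _ _ _)
              refine h2.trans ?_
              apply Fin.ext
              simp only [hpv]
              omega
            · have h2 : i ≠ π'' 0 := by rw [hπ''0]; exact hi
              rw [Function.update_of_ne h2, hp'', Function.update_of_ne hi]
          · rw [hπ'', inv_mul_cancel_right]
        · exact Fin.ext (by rw [Fin.val_last]; omega : ((Fin.last (m+1) : Fin (m+2)) : ℕ) = (j : ℕ))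
      · unfold piv
        rw [dif_neg hj0, dif_pos hjl, dif_neg hp, dif_neg hj0, dif_pos hjl, dif_neg hp]
    · unfold piv
      rw [dif_neg hj0, dif_neg hjl, dif_neg hj0, dif_neg hjl]
      congr 2
      rw [mul_assoc, Equiv.swap_mul_self, mul_one]

/-- Pivoting preserves goodness of the door. -/
lemma good_piv (ℓ : (Fin (m+1) → ℕ) → ℕ) (z : Spx (m+1) N × Fin (m+2))
    (hg : good ℓ z.1 z.2) : good ℓ (piv z).1 (piv z).2 := by
  obtain ⟨⟨p, π⟩, j⟩ := z
  dsimp only at hg ⊢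
  by_cases hj0 : (j : ℕ) = 0
  · by_cases hp : ((p (π 0) : ℕ) + 1) < N
    · have h1 : piv ((p, π), j) =
        ((Function.update p (π 0) ⟨(p (π 0) : ℕ) + 1, hp⟩, π * finRotate (m+1)), Fin.last (m+1)) := by
        unfold piv; simp only [dif_pos hj0, dif_pos hp]
      rw [h1]
      intro t ht
      obtain ⟨k, hkj, hk⟩ := hg t ht
      have hkv : (k : ℕ) ≠ 0 := fun h => hkj (Fin.ext (by omega))
      refine ⟨⟨(k : ℕ) - 1, by have := k.isLt; omega⟩, ?_, ?_⟩
      · intro h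
        have := congrArg Fin.val h
        simp only [Fin.val_last] at this
        have := k.isLt; omega
      · have := vert_rot p π hp ((k : ℕ) - 1) (by have := k.isLt; omega)
        rw [show ((⟨(k : ℕ) - 1, by have := k.isLt; omega⟩ : Fin (m+2)) : ℕ) = (k : ℕ) - 1 from rfl,
          this, show (k : ℕ) - 1 + 1 = (k : ℕ) by omega]
        exact hk
    · have h1 : piv ((p, π), j) = ((p, π), j) := by
        unfold piv; simp only [dif_pos hj0, dif_neg hp]
      rw [h1]; exact hg
  · by_cases hjl : (j : ℕ) = m + 1
    · by_cases hp : (p (π (Fin.last m)) : ℕ) ≠ 0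
      · have h1 : piv ((p, π), j) =
          ((Function.update p (π (Fin.last m))
            ⟨(p (π (Fin.last m)) : ℕ) - 1, by have := (p (π (Fin.last m))).isLt; omega⟩,
            π * (finRotate (m+1))⁻¹), 0) := by
          unfold piv; simp only [dif_neg hj0, dif_pos hjl, dif_pos hp]
        rw [h1]
        set p'' := Function.update p (π (Fin.last m))
            ⟨(p (π (Fin.last m)) : ℕ) - 1, by have := (p (π (Fin.last m))).isLt; omega⟩ with hp''def
        set π'' := π * (finRotate (m+1))⁻¹ with hπ''def
        -- the bottom pivot of ((p'', π''), 0) is ((p, π), last); deduce vertex relation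
        have hrot0 : (finRotate (m+1))⁻¹ (0 : Fin (m+1)) = Fin.last m := by
          rw [Equiv.Perm.inv_eq_iff_eq, finRotate_succ_apply, Fin.last_add_one]
        have hπ''0 : π'' 0 = π (Fin.last m) := by
          rw [hπ''def, Equiv.Perm.mul_apply, hrot0]
        have hpv : (p'' (π'' 0) : ℕ) = (p (π (Fin.last m)) : ℕ) - 1 :=
          congrArg Fin.val ((congrArg _ hπ''0).trans (Function.update_self _ _ _))
        have hplt : ((p'' (π'' 0) : ℕ) + 1) < N := by
          rw [hpv]; have := (p (π (Fin.last m))).isLt; omega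
        have hrel : ∀ k : ℕ, k ≤ m →
            vert (Function.update p'' (π'' 0) ⟨(p'' (π'' 0) : ℕ) + 1, hplt⟩, π'' * finRotate (m+1)) k
              = vert (p'', π'') (k + 1) := fun k hk => vert_rot p'' π'' hplt k hk
        -- identify the updated simplex with (p, π)
        have hid : (Function.update p'' (π'' 0) ⟨(p'' (π'' 0) : ℕ) + 1, hplt⟩, π'' * finRotate (m+1))
            = ((p, π) : Spx (m+1) N) := by
          congr 1
          · funext i
            rcases eq_or_ne i (π (Fin.last m)) with rfl | hi
            · refine ((congrArg _ hπ''0).symm.trans (Function.update_self _ _ _)).trans ?_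
              apply Fin.ext
              simp only [hpv]
              have := (p (π (Fin.last m))).isLt
              have hp' : (p (π (Fin.last m)) : ℕ) ≠ 0 := hp
              omega
            · have h2 : i ≠ π'' 0 := by rw [hπ''0]; exact hi
              rw [Function.update_of_ne h2, hp''def, Function.update_of_ne hi]
          · rw [hπ''def, inv_mul_cancel_right]
        have hrel' : ∀ k : ℕ, k ≤ m → vert ((p, π) : Spx (m+1) N) k = vert (p'', π'') (k + 1) := by
          intro k hk; rw [← hid]; exact hrel k hk
        intro t ht
        obtain ⟨k, hkj, hk⟩ := hg t ht
        have hkv : (k : ℕ) ≤ m := by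
          have h := k.isLt
          rcases Nat.lt_or_ge (k : ℕ) (m+1) with h2 | h2
          · omega
          · exfalso; exact hkj (Fin.ext (by omega))
        refine ⟨⟨(k : ℕ) + 1, by omega⟩, ?_, ?_⟩
        · intro h
          have := congrArg Fin.val h
          simp only [Fin.val_zero] at this
          omega
        · rw [show ((⟨(k : ℕ) + 1, by omega⟩ : Fin (m+2)) : ℕ) = (k : ℕ) + 1 from rfl,
            ← hrel' (k : ℕ) hkv]
          exact hk
      · have h1 : piv ((p, π), j) = ((p, π), j) := by
          unfold piv; simp only [dif_neg hj0, dif_pos hjl, dif_neg hp]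
        rw [h1]; exact hg
    · have h1 : piv ((p, π), j) =
        ((p, π * Equiv.swap (⟨(j : ℕ) - 1, by have := j.isLt; omega⟩ : Fin (m+1))
          (⟨(j : ℕ), by have := j.isLt; omega⟩ : Fin (m+1))), j) := by
        unfold piv; simp only [dif_neg hj0, dif_neg hjl]
      rw [h1]
      intro t ht
      obtain ⟨k, hkj, hk⟩ := hg t ht
      refine ⟨k, hkj, ?_⟩
      rw [vert_swap p π _ _ (by simp; omega) (k : ℕ) (by simpa using fun h => hkj (Fin.ext h))]
      exact hk

/-- Parity: the number of good doors is congruent mod 2 to the number of good fixed doors. -/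
lemma card_good_parity (ℓ : (Fin (m+1) → ℕ) → ℕ) :
    ((Finset.univ : Finset (Spx (m+1) N × Fin (m+2))).filter
        (fun z => good ℓ z.1 z.2)).card
      ≡ ((Finset.univ : Finset (Spx (m+1) N × Fin (m+2))).filter
        (fun z => good ℓ z.1 z.2 ∧ piv z = z)).card [MOD 2] := by
  classical
  set D := (Finset.univ : Finset (Spx (m+1) N × Fin (m+2))).filter (fun z => good ℓ z.1 z.2) with hD
  set Fx := (Finset.univ : Finset (Spx (m+1) N × Fin (m+2))).filter
      (fun z => good ℓ z.1 z.2 ∧ piv z = z) with hFx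
  have hsplit : (D.filter (fun z => piv z = z)).card + (D.filter (fun z => ¬ piv z = z)).card
      = D.card := Finset.card_filter_add_card_filter_not _
  have hFxD : Fx = D.filter (fun z => piv z = z) := by
    rw [hFx, hD, Finset.filter_filter]
  have heven : Even ((D.filter (fun z => ¬ piv z = z)).card) := by
    have hsum : (∑ _z ∈ D.filter (fun z => ¬ piv z = z), (1 : ZMod 2)) = 0 := by
      refine Finset.sum_involution (fun a _ => piv a) (fun a ha => ?_) (fun a ha h => ?_)
        (fun a ha => ?_) (fun a ha => ?_)
      · decide
      · exact (Finset.mem_filter.1 ha).2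
      · obtain ⟨haD, hamv⟩ := Finset.mem_filter.1 ha
        obtain ⟨-, hgood⟩ := Finset.mem_filter.1 haD
        refine Finset.mem_filter.2 ⟨Finset.mem_filter.2 ⟨Finset.mem_univ _, good_piv ℓ a hgood⟩, ?_⟩
        rw [piv_invol]
        exact fun h => hamv h.symm
      · exact piv_invol a
    rw [Finset.sum_const, nsmul_eq_mul, mul_one] at hsum
    have := (ZMod.natCast_eq_zero_iff _ 2).1 hsum
    exact even_iff_two_dvd.2 this
  obtain ⟨c, hc⟩ := heven
  rw [hFxD]
  show _ % 2 = _ % 2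
  omega

/-- Embedding of a permutation of `Fin m` as a permutation of `Fin (m+1)` sending `0` to `last`. -/
def permUp (ρ : Equiv.Perm (Fin m)) : Equiv.Perm (Fin (m+1)) where
  toFun := fun j => Fin.cases (Fin.last m) (fun k => (ρ k).castSucc) j
  invFun := fun i => Fin.lastCases 0 (fun i' => (ρ.symm i').succ) i
  left_inv := by
    intro j
    refine Fin.cases ?_ (fun k => ?_) j
    · simp
    · simp
  right_inv := by
    intro i
    refine Fin.lastCases ?_ (fun i' => ?_) i
    · simp
    · simp

@[simp] lemma permUp_zero (ρ : Equiv.Perm (Fin m)) : permUp ρ 0 = Fin.last m := rfl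

@[simp] lemma permUp_succ (ρ : Equiv.Perm (Fin m)) (k : Fin m) :
    permUp ρ k.succ = (ρ k).castSucc := by
  show Fin.cases (motive := fun _ => Fin (m+1)) (Fin.last m) (fun k => (ρ k).castSucc) k.succ = _
  rw [Fin.cases_succ]

lemma permUp_inv_castSucc (ρ : Equiv.Perm (Fin m)) (i : Fin m) :
    (permUp ρ)⁻¹ i.castSucc = (ρ.symm i).succ := by
  show Fin.lastCases (motive := fun _ => Fin (m+1)) 0 (fun i' => (ρ.symm i').succ) i.castSucc = _
  rw [Fin.lastCases_castSucc]

lemma permUp_inv_last (ρ : Equiv.Perm (Fin m)) :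
    (permUp ρ)⁻¹ (Fin.last m) = 0 := by
  show Fin.lastCases (motive := fun _ => Fin (m+1)) 0 (fun i' => (ρ.symm i').succ) (Fin.last m) = _
  rw [Fin.lastCases_last]

/-- Embedding face simplices as doors. -/
def emb (hN : 0 < N) (w : Spx m N) : Spx (m+1) N × Fin (m+2) :=
  ((Fin.snoc w.1 ⟨N-1, by omega⟩, permUp w.2), 0)

lemma emb_vert (hN : 0 < N) (w : Spx m N) (k : ℕ) :
    vert (emb hN w).1 (k+1) = Fin.snoc (vert w k) N := by
  funext i
  refine Fin.lastCases ?_ (fun i' => ?_) i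
  · show ((Fin.snoc w.1 ⟨N-1, by omega⟩ : Fin (m+1) → Fin N) (Fin.last m) : ℕ) +
      (if (((permUp w.2)⁻¹ (Fin.last m) : Fin (m+1)) : ℕ) < k + 1 then 1 else 0) = _
    rw [Fin.snoc_last, permUp_inv_last, Fin.snoc_last]
    simp only [Fin.val_zero]
    simp only [Nat.zero_lt_succ, if_true]; omega
  · show ((Fin.snoc w.1 ⟨N-1, by omega⟩ : Fin (m+1) → Fin N) i'.castSucc : ℕ) +
      (if (((permUp w.2)⁻¹ i'.castSucc : Fin (m+1)) : ℕ) < k + 1 then 1 else 0) = _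
    rw [Fin.snoc_castSucc, permUp_inv_castSucc, Fin.snoc_castSucc]
    unfold vert
    simp only [Fin.val_succ]
    congr 1
    have hsymm : w.2.symm i' = w.2⁻¹ i' := rfl
    rw [hsymm]
    exact if_congr (by omega) rfl rfl

lemma emb_fixed (hN : 0 < N) (w : Spx m N) : piv (emb hN w) = emb hN w := by
  unfold piv emb
  dsimp only
  rw [dif_pos (show ((0 : Fin (m+2)) : ℕ) = 0 from Fin.val_zero _)]
  rw [dif_neg]
  intro hlt
  rw [permUp_zero, Fin.snoc_last] at hlt
  simp only at hlt
  omega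

lemma emb_good_iff (hN : 0 < N) (ℓ : (Fin (m+1) → ℕ) → ℕ) (w : Spx m N) :
    good ℓ (emb hN w).1 (emb hN w).2 ↔ full (fun q => ℓ (Fin.snoc q N)) w := by
  have hsnd : ((emb hN w).2 : ℕ) = 0 := rfl
  constructor
  · intro hg t ht
    obtain ⟨k, hk0, hk⟩ := hg t ht
    have hkv : (k : ℕ) ≠ 0 := fun h => hk0 (Fin.ext (by rw [hsnd]; exact h))
    refine ⟨⟨(k : ℕ) - 1, by have := k.isLt; omega⟩, ?_⟩
    have hv := emb_vert hN w ((k : ℕ) - 1)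
    rw [show (k:ℕ) - 1 + 1 = (k:ℕ) by omega] at hv
    show ℓ (Fin.snoc (vert w ((k:ℕ) - 1)) N) = t
    rw [← hv]
    exact hk
  · intro hf t ht
    obtain ⟨k, hk⟩ := hf t ht
    refine ⟨⟨(k : ℕ) + 1, by have := k.isLt; omega⟩, ?_, ?_⟩
    · intro h
      have h2 := congrArg Fin.val h
      rw [hsnd] at h2
      simp at h2
    · show ℓ (vert (emb hN w).1 ((k:ℕ) + 1)) = t
      rw [emb_vert hN w (k : ℕ)]
      exact hk

/-- Inverse of `permUp` on permutations sending `0` to `last`. -/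
def permDown (π : Equiv.Perm (Fin (m+1))) (hπ : π 0 = Fin.last m) : Equiv.Perm (Fin m) where
  toFun k := (π k.succ).castPred (fun h => by
    have : (k.succ : Fin (m+1)) = 0 := π.injective (h.trans hπ.symm)
    exact absurd (congrArg Fin.val this) (by simp))
  invFun i := (π⁻¹ i.castSucc).pred (fun h => by
    have : i.castSucc = Fin.last m := by
      rw [← hπ]; rw [Equiv.Perm.inv_eq_iff_eq] at h; exact h
    exact absurd (congrArg Fin.val this) (by simp [Fin.val_last]; omega))
  left_inv k := by
    apply Fin.succ_injective
    rw [Fin.succ_pred, Fin.castSucc_castPred, Equiv.Perm.coe_inv, Equiv.symm_apply_apply]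
  right_inv i := by
    apply Fin.castSucc_injective
    rw [Fin.castSucc_castPred, Fin.succ_pred, Equiv.Perm.coe_inv, Equiv.apply_symm_apply]

lemma permUp_permDown (π : Equiv.Perm (Fin (m+1))) (hπ : π 0 = Fin.last m) :
    permUp (permDown π hπ) = π := by
  apply Equiv.ext
  intro j
  refine Fin.cases ?_ (fun k => ?_) j
  · rw [permUp_zero, hπ]
  · rw [permUp_succ]
    show ((permDown π hπ) k).castSucc = π k.succ
    exact Fin.castSucc_castPred _ (fun h => by
      have h2 : (k.succ : Fin (m+1)) = 0 := π.injective (h.trans hπ.symm)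
      exact absurd (congrArg Fin.val h2) (by simp))

lemma fixed_char (z : Spx (m+1) N × Fin (m+2)) (hfix : piv z = z) :
    ((z.2 : ℕ) = 0 ∧ (z.1.1 (z.1.2 0) : ℕ) + 1 = N) ∨
    ((z.2 : ℕ) = m + 1 ∧ (z.1.1 (z.1.2 (Fin.last m)) : ℕ) = 0) := by
  obtain ⟨⟨p, π⟩, j⟩ := z
  dsimp only at hfix ⊢
  by_cases hj0 : (j : ℕ) = 0
  · left
    refine ⟨hj0, ?_⟩
    by_contra hne
    have hlt : (p (π 0) : ℕ) + 1 < N := by have := (p (π 0)).isLt; omega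
    have h1 : piv ((p, π), j) =
        ((Function.update p (π 0) ⟨(p (π 0) : ℕ) + 1, hlt⟩, π * finRotate (m+1)), Fin.last (m+1)) := by
      unfold piv; simp only [dif_pos hj0, dif_pos hlt]
    rw [h1] at hfix
    have hsnd := congrArg Fin.val (congrArg Prod.snd hfix)
    simp only [Fin.val_last] at hsnd
    omega
  · by_cases hjl : (j : ℕ) = m + 1
    · right
      refine ⟨hjl, ?_⟩
      by_contra hne
      have h1 : piv ((p, π), j) =
          ((Function.update p (π (Fin.last m))
            ⟨(p (π (Fin.last m)) : ℕ) - 1, by have := (p (π (Fin.last m))).isLt; omega⟩,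
            π * (finRotate (m+1))⁻¹), 0) := by
        unfold piv; simp only [dif_neg hj0, dif_pos hjl, dif_pos hne]
      rw [h1] at hfix
      have hsnd := congrArg Fin.val (congrArg Prod.snd hfix)
      simp only [Fin.val_zero] at hsnd
      omega
    · exfalso
      have h1 : piv ((p, π), j) =
          ((p, π * Equiv.swap (⟨(j : ℕ) - 1, by have := j.isLt; omega⟩ : Fin (m+1))
            (⟨(j : ℕ), by have := j.isLt; omega⟩ : Fin (m+1))), j) := by
        unfold piv; simp only [dif_neg hj0, dif_neg hjl]
      rw [h1] at hfix
      have hperm := congrArg Prod.snd (congrArg Prod.fst hfix)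
      dsimp only at hperm
      set a := (⟨(j : ℕ) - 1, by have := j.isLt; omega⟩ : Fin (m+1)) with ha
      set b := (⟨(j : ℕ), by have := j.isLt; omega⟩ : Fin (m+1)) with hb
      have hab : a ≠ b := by
        intro h
        have := congrArg Fin.val h
        simp only [ha, hb] at this
        omega
      have : π (Equiv.swap a b a) = π a := by
        rw [← Equiv.Perm.mul_apply, hperm]
      have := π.injective this
      rw [Equiv.swap_apply_left] at this
      exact hab this.symm

lemma card_fixed_good (hN : 0 < N) (ℓ : (Fin (m+1) → ℕ) → ℕ)
    (hA : ∀ p : Fin (m+1) → ℕ, (∀ i, p i ≤ N) → ∀ i : Fin (m+1), p i = 0 → ℓ p ≠ (i : ℕ) + 1)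
    (hB : ∀ p : Fin (m+1) → ℕ, (∀ i, p i ≤ N) → ∀ i : Fin (m+1), p i = N → ℓ p ≤ (i : ℕ) + 1) :
    ((Finset.univ : Finset (Spx m N)).filter (full (fun q => ℓ (Fin.snoc q N)))).card
      = ((Finset.univ : Finset (Spx (m+1) N × Fin (m+2))).filter
          (fun z => good ℓ z.1 z.2 ∧ piv z = z)).card := by
  refine Finset.card_bij (fun w _ => emb hN w) ?_ ?_ ?_
  · intro w hw
    rw [Finset.mem_filter] at hw ⊢
    exact ⟨Finset.mem_univ _, (emb_good_iff hN ℓ w).2 hw.2, emb_fixed hN w⟩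
  · intro w1 h1 w2 h2 heq
    unfold emb at heq
    have hfst := congrArg Prod.fst heq
    have hq := congrArg Prod.fst hfst
    have hperm := congrArg Prod.snd hfst
    dsimp only at hq hperm
    have hq' : w1.1 = w2.1 := by
      funext i
      have := congrArg (fun f => f i.castSucc) hq
      simpa [Fin.snoc_castSucc] using this
    have hperm' : w1.2 = w2.2 := by
      apply Equiv.ext
      intro k
      have := congrArg (fun σ : Equiv.Perm (Fin (m+1)) => σ k.succ) hperm
      simp only [permUp_succ] at this
      exact Fin.castSucc_injective _ this
    exact Prod.ext hq' hperm'
  · intro z hz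
    rw [Finset.mem_filter] at hz
    obtain ⟨-, hgood, hfix⟩ := hz
    obtain ⟨hj0, hpN⟩ | ⟨hjl, hp0⟩ := fixed_char z hfix
    · -- bottom fixed door
      obtain ⟨⟨p, π⟩, j⟩ := z
      dsimp only at hj0 hpN hgood hfix
      by_cases hlast : π 0 = Fin.last m
      · have hbase : (Fin.snoc (fun i => p i.castSucc) (⟨N-1, by omega⟩ : Fin N) : Fin (m+1) → Fin N) = p := by
          funext i
          refine Fin.lastCases ?_ (fun i' => ?_) i
          · rw [Fin.snoc_last]
            apply Fin.ext
            rw [← hlast]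
            show N - 1 = (p (π 0) : ℕ)
            omega
          · rw [Fin.snoc_castSucc]
        have heq : emb hN ((fun i => p i.castSucc, permDown π hlast) : Spx m N) = ((p, π), j) := by
          unfold emb
          rw [hbase, permUp_permDown]
          exact Prod.ext rfl (Fin.ext hj0.symm)
        refine ⟨(fun i => p i.castSucc, permDown π hlast), Finset.mem_filter.2
          ⟨Finset.mem_univ _, ?_⟩, heq⟩
        refine (emb_good_iff hN ℓ _).1 ?_
        rw [heq]
        exact hgood
      · -- not good : label m+1 is never attained away from vertex 0
        exfalso
        obtain ⟨k, hk0, hk⟩ := hgood (m+1) (by simp)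
        have hkv : (k : ℕ) ≠ 0 := fun h => hk0 (Fin.ext (by rw [h, hj0]))
        have hvi : vert (p, π) (k : ℕ) (π 0) = N := by
          unfold vert
          rw [Equiv.Perm.coe_inv, Equiv.symm_apply_apply]
          simp only [Fin.val_zero]
          simp only [show 0 < (k:ℕ) by omega, if_true]
          omega
        have hle := hB (vert (p, π) (k : ℕ)) (vert_le _ _) (π 0) hvi
        rw [hk] at hle
        have : ((π 0 : Fin (m+1)) : ℕ) < m := by
          have h1 := (π 0).isLt
          have h2 : ((π 0 : Fin (m+1)) : ℕ) ≠ m := fun h => hlast (Fin.ext (by rw [h, Fin.val_last]))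
          omega
        omega
    · -- top fixed door : never good
      exfalso
      obtain ⟨⟨p, π⟩, j⟩ := z
      dsimp only at hjl hp0 hgood hfix
      obtain ⟨k, hk0, hk⟩ := hgood (((π (Fin.last m) : Fin (m+1)) : ℕ) + 1)
        (by simp only [Finset.mem_Icc]; have := (π (Fin.last m)).isLt; omega)
      have hkv : (k : ℕ) ≤ m := by
        have h1 := k.isLt
        have h2 : (k : ℕ) ≠ m + 1 := fun h => hk0 (Fin.ext (by rw [h, hjl]))
        omega
      have hvi : vert (p, π) (k : ℕ) (π (Fin.last m)) = 0 := by
        unfold vert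
        rw [Equiv.Perm.coe_inv, Equiv.symm_apply_apply]
        simp only [Fin.val_last]
        rw [if_neg (by omega : ¬ m < (k:ℕ))]
        omega
      exact hA (vert (p, π) (k : ℕ)) (vert_le _ _) (π (Fin.last m)) hvi hk

/-- **Kuhn's combinatorial lemma**: the number of fully-labelled Kuhn simplices is odd. -/
theorem kuhn : ∀ (m N : ℕ), 0 < N → ∀ ℓ : (Fin m → ℕ) → ℕ,
    (∀ p : Fin m → ℕ, (∀ i, p i ≤ N) → ℓ p ∈ Finset.Icc 1 (m+1)) →
    (∀ p : Fin m → ℕ, (∀ i, p i ≤ N) → ∀ i : Fin m, p i = 0 → ℓ p ≠ (i : ℕ) + 1) →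
    (∀ p : Fin m → ℕ, (∀ i, p i ≤ N) → ∀ i : Fin m, p i = N → ℓ p ≤ (i : ℕ) + 1) →
    Odd ((Finset.univ : Finset (Spx m N)).filter (full ℓ)).card := by
  intro m
  induction m with
  | zero =>
    intro N hN ℓ hC hA hB
    have hall : ∀ s : Spx 0 N, full ℓ s := by
      intro s t ht
      rcases Finset.mem_Icc.1 ht with ⟨h1, h2⟩
      refine ⟨0, ?_⟩
      show ℓ (vert s 0) = t
      have h3 := hC (vert s 0) (fun i => i.elim0)
      rcases Finset.mem_Icc.1 h3 with ⟨h4, h5⟩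
      omega
    rw [Finset.filter_true_of_mem (fun s _ => hall s)]
    rw [Finset.card_univ]
    rw [Fintype.card_eq_one_iff.2 ⟨((fun i => i.elim0), Equiv.refl _),
      fun y => Prod.ext (funext fun i => i.elim0) (Equiv.ext fun i => i.elim0)⟩]
    exact odd_one
  | succ m ih =>
    intro N hN ℓ hC hA hB
    -- counting good doors fiberwise
    have hCv : ∀ (s : Spx (m+1) N) (k : Fin (m+2)), ℓ (vert s k) ∈ Finset.Icc 1 (m+2) :=
      fun s k => hC (vert s (k : ℕ)) (vert_le s (k : ℕ))
    have hper : ∀ s : Spx (m+1) N,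
        ((Finset.univ : Finset (Fin (m+2))).filter (good ℓ s)).card % 2
          = (if full ℓ s then 1 else 0) % 2 := by
      intro s
      by_cases hf : full ℓ s
      · rw [cardgood_of_full (hCv s) hf, if_pos hf]
      · rcases cardgood_of_not_full (hCv s) hf with h | h <;> rw [h, if_neg hf]
    have hsum : ((Finset.univ : Finset (Spx (m+1) N × Fin (m+2))).filter
        (fun z => good ℓ z.1 z.2)).card
          = ∑ s : Spx (m+1) N, ((Finset.univ : Finset (Fin (m+2))).filter (good ℓ s)).card := by
      rw [Finset.card_filter, Fintype.sum_prod_type]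
      exact Finset.sum_congr rfl fun s _ => (Finset.card_filter _ _).symm
    have hsum2 : ((Finset.univ : Finset (Spx (m+1) N × Fin (m+2))).filter
        (fun z => good ℓ z.1 z.2)).card % 2
          = ((Finset.univ : Finset (Spx (m+1) N)).filter (full ℓ)).card % 2 := by
      rw [hsum, Finset.sum_nat_mod]
      rw [Finset.sum_congr rfl fun s _ => hper s]
      rw [← Finset.sum_nat_mod]
      rw [Finset.card_filter]
    -- face labelling
    have hsnoc_le : ∀ q : Fin m → ℕ, (∀ i, q i ≤ N) → ∀ i : Fin (m+1), (Fin.snoc q N : Fin (m+1) → ℕ) i ≤ N := by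
      intro q hq i
      refine Fin.lastCases (motive := fun i => (Fin.snoc q N : Fin (m+1) → ℕ) i ≤ N) ?_ (fun i' => ?_) i
      · show (Fin.snoc q N : Fin (m+1) → ℕ) (Fin.last m) ≤ N
        rw [Fin.snoc_last]
      · show (Fin.snoc q N : Fin (m+1) → ℕ) i'.castSucc ≤ N
        rw [Fin.snoc_castSucc]; exact hq i'
    have hC' : ∀ q : Fin m → ℕ, (∀ i, q i ≤ N) → ℓ (Fin.snoc q N) ∈ Finset.Icc 1 (m+1) := by
      intro q hq
      have h1 := hC (Fin.snoc q N) (hsnoc_le q hq)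
      have h2 := hB (Fin.snoc q N) (hsnoc_le q hq) (Fin.last m) (by simp)
      rw [Fin.val_last] at h2
      rcases Finset.mem_Icc.1 h1 with ⟨h3, h4⟩
      exact Finset.mem_Icc.2 ⟨h3, h2⟩
    have hA' : ∀ q : Fin m → ℕ, (∀ i, q i ≤ N) → ∀ i : Fin m, q i = 0 → ℓ (Fin.snoc q N) ≠ (i : ℕ) + 1 := by
      intro q hq i hi
      have := hA (Fin.snoc q N) (hsnoc_le q hq) i.castSucc (by rw [Fin.snoc_castSucc]; exact hi)
      rwa [Fin.coe_castSucc] at this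
    have hB' : ∀ q : Fin m → ℕ, (∀ i, q i ≤ N) → ∀ i : Fin m, q i = N → ℓ (Fin.snoc q N) ≤ (i : ℕ) + 1 := by
      intro q hq i hi
      have := hB (Fin.snoc q N) (hsnoc_le q hq) i.castSucc (by rw [Fin.snoc_castSucc]; exact hi)
      rwa [Fin.coe_castSucc] at this
    have hodd := ih N hN (fun q => ℓ (Fin.snoc q N)) hC' hA' hB'
    have hpar := card_good_parity (N := N) ℓ
    have hfix := card_fixed_good hN ℓ hA hB
    rw [Nat.odd_iff] at hodd ⊢
    have hpar' := hpar
    unfold Nat.ModEq at hpar'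
    omega

end PM

/-- **Bolzano–Poincaré–Miranda theorem.** Let `F = (f_1, …, f_n)` be a
continuous map on the unit cube `[0,1]^n` such that for each `k`, `f_k ≥ 0` on the face
`{x_k = 0}` and `f_k ≤ 0` on the face `{x_k = 1}`. Then `F` has a zero in the cube. -/
theorem poincare_miranda
    (n : ℕ) (hn : 1 ≤ n)
    (F : (Fin n → ℝ) → Fin n → ℝ)
    (hF : ContinuousOn F (Set.Icc (0 : Fin n → ℝ) 1))
    (h0 : ∀ x ∈ Set.Icc (0 : Fin n → ℝ) 1, ∀ k, x k = 0 → 0 ≤ F x k)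
    (h1 : ∀ x ∈ Set.Icc (0 : Fin n → ℝ) 1, ∀ k, x k = 1 → F x k ≤ 0) :
    ∃ x ∈ Set.Icc (0 : Fin n → ℝ) 1, F x = 0 := by
  classical
  have hcomp : IsCompact (Set.Icc (0 : Fin n → ℝ) 1) := isCompact_Icc
  -- Step 1: approximate zeros at every scale
  have key : ∀ ε : ℝ, 0 < ε → ∃ x ∈ Set.Icc (0 : Fin n → ℝ) 1, ∀ i, |F x i| ≤ ε := by
    intro ε hε
    have hunif := hcomp.uniformContinuousOn_of_continuous hF
    rw [Metric.uniformContinuousOn_iff] at hunif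
    obtain ⟨δ, hδ, hδ2⟩ := hunif ε hε
    obtain ⟨N₀, hN₀⟩ := exists_nat_one_div_lt hδ
    set N := N₀ + 1 with hNdef
    have hN : 0 < N := Nat.succ_pos _
    have hNR : (0 : ℝ) < N := by positivity
    have hNinv : (1 : ℝ) / N < δ := by
      rw [hNdef]; push_cast; exact hN₀
    set c : (Fin n → ℕ) → (Fin n → ℝ) := fun p i => (p i : ℝ) / N with hc
    have hmem : ∀ p : Fin n → ℕ, (∀ i, p i ≤ N) → c p ∈ Set.Icc (0 : Fin n → ℝ) 1 := by
      intro p hp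
      constructor
      · intro i; show (0:ℝ) ≤ (p i : ℝ) / N; positivity
      · intro i
        show (p i : ℝ) / N ≤ 1
        rw [div_le_one hNR]
        exact_mod_cast hp i
    set S : (Fin n → ℕ) → Finset (Fin n) :=
      fun p => Finset.univ.filter (fun i : Fin n => F (c p) i ≤ 0 ∧ p i ≠ 0) with hS
    set ℓ : (Fin n → ℕ) → ℕ := fun p =>
      if h : (S p).Nonempty then (((S p).min' h : Fin n) : ℕ) + 1 else n + 1 with hℓ
    -- label facts
    have lf1 : ∀ p (i : Fin n), ℓ p = (i : ℕ) + 1 → F (c p) i ≤ 0 := by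
      intro p i h
      rw [hℓ] at h
      dsimp only at h
      split at h
      · rename_i hne
        have hmin : (S p).min' hne = i := Fin.ext (by omega)
        have := (S p).min'_mem hne
        rw [hmin] at this
        rw [hS] at this
        exact (Finset.mem_filter.1 this).2.1
      · exact absurd h (by have := i.isLt; omega)
    have lf2 : ∀ p, ℓ p = n + 1 → ∀ i, 0 < F (c p) i ∨ p i = 0 := by
      intro p h i
      rw [hℓ] at h
      dsimp only at h
      split at h
      · rename_i hne
        exact absurd h (by have := ((S p).min' hne).isLt; omega)
      · rename_i hne
        rw [Finset.not_nonempty_iff_eq_empty, hS, Finset.filter_eq_empty_iff] at hne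
        have := hne (Finset.mem_univ i)
        by_cases hFp : 0 < F (c p) i
        · exact Or.inl hFp
        · right
          by_contra hpi
          exact this ⟨by linarith, hpi⟩
    -- Kuhn hypotheses
    have hC : ∀ p : Fin n → ℕ, (∀ i, p i ≤ N) → ℓ p ∈ Finset.Icc 1 (n+1) := by
      intro p _
      rw [hℓ]
      dsimp only
      split
      · rename_i hne
        have := ((S p).min' hne).isLt
        simp only [Finset.mem_Icc]
        omega
      · simp only [Finset.mem_Icc]; omega
    have hA : ∀ p : Fin n → ℕ, (∀ i, p i ≤ N) → ∀ i : Fin n, p i = 0 → ℓ p ≠ (i : ℕ) + 1 := by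
      intro p _ i hpi h
      rw [hℓ] at h
      dsimp only at h
      split at h
      · rename_i hne
        have hmin : (S p).min' hne = i := Fin.ext (by omega)
        have := (S p).min'_mem hne
        rw [hmin, hS] at this
        exact (Finset.mem_filter.1 this).2.2 hpi
      · exact absurd h (by have := i.isLt; omega)
    have hB : ∀ p : Fin n → ℕ, (∀ i, p i ≤ N) → ∀ i : Fin n, p i = N → ℓ p ≤ (i : ℕ) + 1 := by
      intro p hp i hpi
      have hci : c p i = 1 := by
        show ((p i : ℝ)) / N = 1
        rw [hpi]; field_simp
      have hFi : F (c p) i ≤ 0 := h1 (c p) (hmem p hp) i hci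
      have hiS : i ∈ S p := by
        rw [hS]
        exact Finset.mem_filter.2 ⟨Finset.mem_univ _, hFi, by omega⟩
      have hne : (S p).Nonempty := ⟨i, hiS⟩
      rw [hℓ]
      dsimp only
      rw [dif_pos hne]
      have := (S p).min'_le i hiS
      omega
    -- get a fully labelled simplex
    have hodd := PM.kuhn n N hN ℓ hC hA hB
    have hpos : 0 < ((Finset.univ : Finset (PM.Spx n N)).filter (PM.full ℓ)).card := by
      rcases hodd with ⟨k, hk⟩; omega
    obtain ⟨s, hs⟩ := Finset.card_pos.1 hpos
    have hfull := (Finset.mem_filter.1 hs).2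
    -- vertices are close to each other
    have hvd : ∀ j k : ℕ, dist (c (PM.vert s j)) (c (PM.vert s k)) ≤ 1 / N := by
      intro j k
      rw [dist_pi_le_iff (by positivity)]
      intro i
      have hb1 : PM.vert s j i ≤ PM.vert s k i + 1 := by
        unfold PM.vert; split <;> split <;> omega
      have hb2 : PM.vert s k i ≤ PM.vert s j i + 1 := by
        unfold PM.vert; split <;> split <;> omega
      show dist ((PM.vert s j i : ℝ) / N) ((PM.vert s k i : ℝ) / N) ≤ 1 / N
      rw [Real.dist_eq, div_sub_div_same, abs_div, abs_of_pos hNR,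
        div_le_div_iff_of_pos_right hNR]
      rw [abs_sub_le_iff]
      constructor
      · linarith [(by exact_mod_cast hb1 : (PM.vert s j i : ℝ) ≤ (PM.vert s k i : ℝ) + 1)]
      · linarith [(by exact_mod_cast hb2 : (PM.vert s k i : ℝ) ≤ (PM.vert s j i : ℝ) + 1)]
    have hvmem : ∀ j : ℕ, c (PM.vert s j) ∈ Set.Icc (0 : Fin n → ℝ) 1 :=
      fun j => hmem _ (PM.vert_le s j)
    have hFd : ∀ j k : ℕ, ∀ i : Fin n,
        |F (c (PM.vert s j)) i - F (c (PM.vert s k)) i| < ε := by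
      intro j k i
      have := hδ2 _ (hvmem j) _ (hvmem k) (lt_of_le_of_lt (hvd j k) hNinv)
      calc |F (c (PM.vert s j)) i - F (c (PM.vert s k)) i|
          = dist (F (c (PM.vert s j)) i) (F (c (PM.vert s k)) i) := (Real.dist_eq _ _).symm
        _ ≤ dist (F (c (PM.vert s j))) (F (c (PM.vert s k))) := dist_le_pi_dist _ _ i
        _ < ε := this
    -- nonnegative vertex
    obtain ⟨k₀, hk₀⟩ := hfull (n+1) (by simp)
    have hpos0 : ∀ i, 0 ≤ F (c (PM.vert s (k₀ : ℕ))) i := by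
      intro i
      rcases lf2 _ hk₀ i with h | h
      · linarith
      · refine h0 _ (hvmem (k₀ : ℕ)) i ?_
        show ((PM.vert s (k₀ : ℕ) i : ℝ)) / N = 0
        rw [h]; simp
    refine ⟨c (PM.vert s (k₀ : ℕ)), hvmem _, fun i => ?_⟩
    obtain ⟨ki, hki⟩ := hfull ((i : ℕ) + 1)
      (by simp only [Finset.mem_Icc]; have := i.isLt; omega)
    have hneg : F (c (PM.vert s (ki : ℕ))) i ≤ 0 := lf1 _ i hki
    have hd := hFd (k₀ : ℕ) (ki : ℕ) i
    rw [abs_sub_lt_iff] at hd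
    rw [abs_le]
    constructor
    · linarith [hpos0 i]
    · linarith [hd.1]
  -- Step 2: compactness
  have hseq : ∀ j : ℕ, ∃ x ∈ Set.Icc (0 : Fin n → ℝ) 1, ∀ i, |F x i| ≤ 1 / (j + 1) :=
    fun j => key (1 / (j + 1)) (by positivity)
  choose x hx hb using hseq
  obtain ⟨a, ha, φ, hφ, hconv⟩ := hcomp.tendsto_subseq hx
  refine ⟨a, ha, ?_⟩
  funext i
  have htend : Filter.Tendsto (fun k => F (x (φ k)) i) Filter.atTop (nhds (F a i)) := by
    have hwithin : Filter.Tendsto (x ∘ φ) Filter.atTop (nhdsWithin a (Set.Icc 0 1)) :=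
      tendsto_nhdsWithin_of_tendsto_nhds_of_eventually_within _ hconv
        (Filter.Eventually.of_forall (fun k => hx (φ k)))
    have h2 := (hF a ha).tendsto.comp hwithin
    exact ((continuous_apply i).tendsto (F a)).comp h2
  have hzero : Filter.Tendsto (fun k => F (x (φ k)) i) Filter.atTop (nhds 0) := by
    refine squeeze_zero_norm (fun k => ?_) tendsto_one_div_add_atTop_nhds_zero_nat
    have h1' : |F (x (φ k)) i| ≤ 1 / (φ k + 1) := hb (φ k) i
    have h2' : (1 : ℝ) / (φ k + 1) ≤ 1 / (k + 1) := by
      apply one_div_le_one_div_of_le (by positivity)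
      linarith [(by exact_mod_cast hφ.le_apply : (k : ℝ) ≤ (φ k : ℝ))]
    rw [Real.norm_eq_abs]
    exact h1'.trans h2'
  have := tendsto_nhds_unique htend hzero
  simpa using this
end

section
/- Let B be a finite Blaschke product of degree d ≥ 1, i.e. B(z) = λ ∏_{k=1}^{d} (z − a_k)/(1 − conj(a_k) z) with |λ| = 1 and a_1, …, a_d ∈ 𝔻. Let h be a Möbius transformation of the Riemann sphere with h(𝔻) = 𝔻 and h(1) = 1, and suppose B(h(z)) = B(z) for all z ∈ 𝔻. Then h is the identity map. -/
open Metric Set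

noncomputable section

private lemma blaschke_aux_sum_pos {d : ℕ} (hd : 1 ≤ d) (a : Fin d → ℂ)
    (ha : ∀ k, ‖a k‖ < 1) :
    0 < ∑ i : Fin d, (1 - Complex.normSq (a i)) *
      ∏ j ∈ Finset.univ.erase i, Complex.normSq (1 - a j) := by
  have : Nonempty (Fin d) := ⟨⟨0, hd⟩⟩
  apply Finset.sum_pos
  · intro i _
    apply mul_pos
    · have h1 : Complex.normSq (a i) < 1 := by
        rw [← Complex.sq_norm]
        nlinarith [norm_nonneg (a i), ha i]
      linarith
    · apply Finset.prod_pos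
      intro j _
      apply Complex.normSq_pos.2
      intro hj
      rw [sub_eq_zero] at hj
      have := ha j
      rw [← hj] at this
      simp at this
  · exact Finset.univ_nonempty

/-- Let `B` be a finite Blaschke product of degree `d ≥ 1`,
`B(z) = λ ∏_{k=1}^d (z - a k)/(1 - conj (a k) z)` with `|λ| = 1`, `a k ∈ 𝔻`. If `h` is a
Möbius transformation with `h(𝔻) = 𝔻`, `h 1 = 1` and `B ∘ h = B` on `𝔻`, then `h` is the
identity. -/
theorem blaschke_no_nontrivial_symmetry
    (d : ℕ) (hd : 1 ≤ d) (lam : ℂ) (hlam : ‖lam‖ = 1)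
    (a : Fin d → ℂ) (ha : ∀ k, ‖a k‖ < 1)
    (B : ℂ → ℂ)
    (hB : ∀ z, B z = lam * ∏ k, (z - a k) / (1 - (starRingEnd ℂ) (a k) * z))
    (p q r s : ℂ) (hdet : p * s - q * r ≠ 0)
    (h : ℂ → ℂ) (hh : ∀ z, h z = (p * z + q) / (r * z + s))
    (hdisk : h '' Metric.ball (0 : ℂ) 1 = Metric.ball (0 : ℂ) 1)
    (hone : h 1 = 1)
    (hconj : ∀ z ∈ Metric.ball (0 : ℂ) 1, B (h z) = B z) :
    ∀ z : ℂ, h z = z := by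
  classical
  have hmem : ∀ z : ℂ, z ∈ ball (0:ℂ) 1 ↔ ‖z‖ < 1 := fun z => by
    rw [mem_ball_zero_iff]
  have hlam0 : lam ≠ 0 := by
    intro h0; rw [h0] at hlam; simp at hlam
  -- denominators of B do not vanish on the closed disk
  have hdenom : ∀ (k : Fin d) (z : ℂ), ‖z‖ ≤ 1 →
      (1 : ℂ) - (starRingEnd ℂ) (a k) * z ≠ 0 := by
    intro k z hz h0
    rw [sub_eq_zero] at h0
    have habs := congrArg norm h0
    rw [norm_one, norm_mul, Complex.norm_conj] at habs
    nlinarith [ha k, norm_nonneg (a k), norm_nonneg z]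
  -- `h` maps the disk into the disk
  have hsub : ∀ z ∈ ball (0:ℂ) 1, h z ∈ ball (0:ℂ) 1 := fun z hz =>
    hdisk ▸ Set.mem_image_of_mem h hz
  -- the denominator of `h` does not vanish on the disk
  have hpole : ∀ z ∈ ball (0:ℂ) 1, r * z + s ≠ 0 := by
    intro z0 hz0 h0
    have hr0 : r ≠ 0 := by
      rintro rfl
      rw [zero_mul, zero_add] at h0
      exact hdet (by rw [h0]; ring)
    have hnum : p * z0 + q ≠ 0 := fun hn => hdet (by linear_combination p * h0 - r * hn)
    have hcpos : 0 < ‖p * z0 + q‖ := norm_pos_iff.mpr hnum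
    set c : ℝ := ‖p * z0 + q‖ with hcdef
    have hRpos : 0 < ‖r‖ := norm_pos_iff.mpr hr0
    set R : ℝ := ‖r‖ with hRdef
    have hz0' : ‖z0‖ < 1 := (hmem z0).1 hz0
    set t : ℝ := min ((1 - ‖z0‖)/2) (c / (4 * (‖p‖ + R))) with htdef
    have htpos : 0 < t := lt_min (by linarith) (by positivity)
    have ht1 : t ≤ (1 - ‖z0‖)/2 := min_le_left _ _
    have ht2 : t * (4 * (‖p‖ + R)) ≤ c := by
      have := min_le_right ((1 - ‖z0‖)/2) (c / (4 * (‖p‖ + R)))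
      rw [← htdef] at this
      calc t * (4 * (‖p‖ + R)) ≤
          (c / (4 * (‖p‖ + R))) * (4 * (‖p‖ + R)) := by
            apply mul_le_mul_of_nonneg_right this (by positivity)
        _ = c := by field_simp
    set w : ℂ := z0 + (t : ℂ) with hwdef
    have hwball : w ∈ ball (0:ℂ) 1 := by
      rw [hmem]
      calc ‖w‖ ≤ ‖z0‖ + ‖(t:ℂ)‖ := norm_add_le _ _
        _ = ‖z0‖ + t := by rw [Complex.norm_real, Real.norm_eq_abs, abs_of_pos htpos]
        _ < 1 := by linarith
    have hhw : ‖h w‖ < 1 := (hmem _).1 (hsub w hwball)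
    have hden : r * w + s = r * (t:ℂ) := by rw [hwdef]; linear_combination h0
    have habs : ‖h w‖ = ‖p * w + q‖ / (R * t) := by
      rw [hh w, hden, norm_div, norm_mul, Complex.norm_real, Real.norm_eq_abs, abs_of_pos htpos]
    have hnum_lb : c - ‖p‖ * t ≤ ‖p * w + q‖ := by
      have hsplit : p * w + q = (p * z0 + q) + p * (t:ℂ) := by rw [hwdef]; ring
      rw [hsplit]
      have := norm_sub_norm_le (p * z0 + q) (-(p * (t:ℂ)))
      simp only [norm_neg, sub_neg_eq_add] at this
      calc c - ‖p‖ * t = ‖p * z0 + q‖ - ‖p * (t:ℂ)‖ := by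
            rw [norm_mul, Complex.norm_real, Real.norm_eq_abs, abs_of_pos htpos]
        _ ≤ _ := this
    have hpt : ‖p‖ * t ≤ c / 4 := by
      nlinarith [mul_nonneg htpos.le hRpos.le]
    have hRt : R * t ≤ c / 4 := by
      nlinarith [mul_nonneg htpos.le (norm_nonneg p)]
    have h1 : ‖p * w + q‖ < R * t := by
      rw [habs] at hhw
      exact (div_lt_one (by positivity)).1 hhw
    linarith
  -- `h` has nonzero denominator at 1
  have hrs : r * 1 + s ≠ 0 := by
    intro h0
    rw [hh 1, h0, div_zero] at hone
    exact one_ne_zero hone.symm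
  -- differentiability of h
  have hhfun : h = fun z => (p * z + q) / (r * z + s) := funext hh
  have hhdiff : ∀ z : ℂ, r * z + s ≠ 0 → DifferentiableAt ℂ h z := by
    intro z hz
    rw [hhfun]
    exact DifferentiableAt.div (by fun_prop) (by fun_prop) hz
  -- B as a quotient
  have hBeq : B = fun z => (lam * ((∏ k, (z - a k)) / (∏ k, ((1:ℂ) - (starRingEnd ℂ) (a k) * z)))) := by
    funext z
    rw [hB z, Finset.prod_div_distrib]
  -- differentiability of B
  have hBdiff : ∀ z : ℂ, (∀ k, (1:ℂ) - (starRingEnd ℂ) (a k) * z ≠ 0) → DifferentiableAt ℂ B z := by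
    intro z hz
    rw [hBeq]
    have h1 : DifferentiableAt ℂ (fun z : ℂ => ∏ k : Fin d, (z - a k)) z := by
      have := DifferentiableAt.fun_finsetProd (u := Finset.univ)
        (f := fun (k : Fin d) (z : ℂ) => z - a k) (x := z) (fun i _ => by fun_prop)
      simpa using this
    have h2 : DifferentiableAt ℂ (fun z : ℂ => ∏ k : Fin d, ((1:ℂ) - (starRingEnd ℂ) (a k) * z)) z := by
      have := DifferentiableAt.fun_finsetProd (u := Finset.univ)
        (f := fun (k : Fin d) (z : ℂ) => (1:ℂ) - (starRingEnd ℂ) (a k) * z) (x := z)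
        (fun i _ => by fun_prop)
      simpa using this
    have hne : (∏ k : Fin d, ((1:ℂ) - (starRingEnd ℂ) (a k) * z)) ≠ 0 :=
      Finset.prod_ne_zero_iff.2 fun k _ => hz k
    exact (h1.div h2 hne).const_mul lam
  -- choose a neighborhood of 1 where everything is fine
  have hev1 : ∀ᶠ z in nhds (1:ℂ), r * z + s ≠ 0 := by
    have : ContinuousAt (fun z : ℂ => r * z + s) 1 := by fun_prop
    exact this.eventually_ne hrs
  have hev2 : ∀ᶠ z in nhds (1:ℂ), ∀ k, (1:ℂ) - (starRingEnd ℂ) (a k) * z ≠ 0 := by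
    rw [Filter.eventually_all]
    intro k
    have hc : ContinuousAt (fun z : ℂ => (1:ℂ) - (starRingEnd ℂ) (a k) * z) 1 := by fun_prop
    exact hc.eventually_ne (hdenom k 1 (by simp))
  have hev3 : ∀ᶠ z in nhds (1:ℂ), ∀ k, (1:ℂ) - (starRingEnd ℂ) (a k) * h z ≠ 0 := by
    rw [Filter.eventually_all]
    intro k
    have hc : ContinuousAt (fun z : ℂ => (1:ℂ) - (starRingEnd ℂ) (a k) * h z) 1 := by
      exact (continuousAt_const.sub (continuousAt_const.mul (hhdiff 1 hrs).continuousAt))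
    apply hc.eventually_ne
    show (1:ℂ) - (starRingEnd ℂ) (a k) * h 1 ≠ 0
    rw [hone, mul_one]
    have := hdenom k 1 (by simp)
    simpa using this
  obtain ⟨ε₀, hε₀, hballP⟩ := Metric.eventually_nhds_iff.1 ((hev1.and hev2).and hev3)
  set ε : ℝ := min ε₀ 1 with hεdef
  have hεpos : 0 < ε := lt_min hε₀ one_pos
  have hε1 : ε ≤ 1 := min_le_right _ _
  have hP : ∀ z ∈ ball (1:ℂ) ε, (r * z + s ≠ 0 ∧ ∀ k, (1:ℂ) - (starRingEnd ℂ) (a k) * z ≠ 0) ∧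
      ∀ k, (1:ℂ) - (starRingEnd ℂ) (a k) * h z ≠ 0 := by
    intro z hz
    exact hballP (lt_of_lt_of_le (mem_ball.1 hz) (min_le_left _ _))
  -- the domain
  set Ω : Set ℂ := ball (0:ℂ) 1 ∪ ball (1:ℂ) ε with hΩdef
  have hΩopen : IsOpen Ω := isOpen_ball.union isOpen_ball
  have hΩconn : IsPreconnected Ω := by
    apply IsPreconnected.union (((1:ℝ) - ε/2 : ℝ) : ℂ)
    · rw [hmem]
      rw [Complex.norm_real, Real.norm_eq_abs, abs_of_pos (by linarith)]
      linarith
    · rw [mem_ball]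
      have : dist ((((1:ℝ) - ε/2 : ℝ)) : ℂ) 1 = ε/2 := by
        rw [Complex.dist_eq]
        have : ((((1:ℝ) - ε/2 : ℝ)) : ℂ) - 1 = ((-(ε/2) : ℝ) : ℂ) := by push_cast; ring
        rw [this, Complex.norm_real, Real.norm_eq_abs, abs_of_neg (by linarith)]
        ring
      rw [this]; linarith
    · exact (convex_ball _ _).isPreconnected
    · exact (convex_ball _ _).isPreconnected
  have hdiffBh : DifferentiableOn ℂ (fun z => B (h z)) Ω := by
    intro z hz
    apply DifferentiableAt.differentiableWithinAt
    rcases hz with hz | hz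
    · exact (hBdiff (h z) fun k => hdenom k (h z) ((hmem _).1 (hsub z hz)).le).comp z
        (hhdiff z (hpole z hz))
    · obtain ⟨⟨h1, _⟩, h3⟩ := hP z hz
      exact (hBdiff (h z) h3).comp z (hhdiff z h1)
  have hdiffB : DifferentiableOn ℂ B Ω := by
    intro z hz
    apply DifferentiableAt.differentiableWithinAt
    rcases hz with hz | hz
    · exact hBdiff z fun k => hdenom k z ((hmem z).1 hz).le
    · obtain ⟨⟨_, h2⟩, _⟩ := hP z hz
      exact hBdiff z h2
  -- identity theorem
  have hEq : EqOn (fun z => B (h z)) B Ω := by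
    apply AnalyticOnNhd.eqOn_of_preconnected_of_eventuallyEq
      (hdiffBh.analyticOnNhd hΩopen) (hdiffB.analyticOnNhd hΩopen) hΩconn
      (z₀ := 0) (Or.inl (mem_ball_self one_pos))
    exact Filter.eventuallyEq_of_mem (Metric.ball_mem_nhds (0:ℂ) one_pos)
      (fun z hz => hconj z hz)
  have heq1 : ∀ᶠ z in nhds (1:ℂ), B (h z) = B z :=
    Filter.eventually_of_mem (Metric.ball_mem_nhds (1:ℂ) hεpos)
      (fun z hz => hEq (Or.inr hz))
  -- derivative of B at 1
  have hPder : HasStrictDerivAt (fun z : ℂ => ∏ k : Fin d, (z - a k))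
      (∑ i : Fin d, ∏ j ∈ Finset.univ.erase i, ((1:ℂ) - a j)) 1 := by
    have := HasStrictDerivAt.fun_finsetProd (u := Finset.univ)
      (f := fun (k : Fin d) (z : ℂ) => z - a k) (f' := fun _ => (1:ℂ)) (x := 1)
      (fun i _ => (hasStrictDerivAt_id 1).sub_const (a i))
    simpa using this
  have hQder : HasStrictDerivAt (fun z : ℂ => ∏ k : Fin d, ((1:ℂ) - (starRingEnd ℂ) (a k) * z))
      (∑ i : Fin d, (∏ j ∈ Finset.univ.erase i, ((1:ℂ) - (starRingEnd ℂ) (a j))) *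
        (-((starRingEnd ℂ) (a i)))) 1 := by
    have := HasStrictDerivAt.fun_finsetProd (u := Finset.univ)
      (f := fun (k : Fin d) (z : ℂ) => (1:ℂ) - (starRingEnd ℂ) (a k) * z)
      (f' := fun k => -((starRingEnd ℂ) (a k) * 1)) (x := 1)
      (fun i _ => ((hasStrictDerivAt_id (1:ℂ)).const_mul ((starRingEnd ℂ) (a i))).const_sub 1)
    simpa [mul_one] using this
  have hQ1ne : (∏ k : Fin d, ((1:ℂ) - (starRingEnd ℂ) (a k) * 1)) ≠ 0 :=
    Finset.prod_ne_zero_iff.2 fun k _ => hdenom k 1 (by simp)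
  have hQ1ne' : (∏ k : Fin d, ((1:ℂ) - (starRingEnd ℂ) (a k))) ≠ 0 := by
    simpa using hQ1ne
  set P' : ℂ := ∑ i : Fin d, ∏ j ∈ Finset.univ.erase i, ((1:ℂ) - a j) with hP'def
  set Q' : ℂ := ∑ i : Fin d, (∏ j ∈ Finset.univ.erase i, ((1:ℂ) - (starRingEnd ℂ) (a j))) *
    (-((starRingEnd ℂ) (a i))) with hQ'def
  set P₁ : ℂ := ∏ k : Fin d, ((1:ℂ) - a k) with hP₁def
  set Q₁ : ℂ := ∏ k : Fin d, ((1:ℂ) - (starRingEnd ℂ) (a k)) with hQ₁def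
  have hstrict : HasStrictDerivAt B (lam * ((P' * Q₁ - P₁ * Q') / Q₁ ^ 2)) 1 := by
    rw [hBeq]
    have := (hPder.div hQder hQ1ne).const_mul lam
    simpa using this
  -- the derivative is nonzero
  have hNval : P' * Q₁ - P₁ * Q' =
      ((∑ i : Fin d, (1 - Complex.normSq (a i)) *
        ∏ j ∈ Finset.univ.erase i, Complex.normSq (1 - a j) : ℝ) : ℂ) := by
    rw [hP'def, hQ'def, Finset.sum_mul, Finset.mul_sum, ← Finset.sum_sub_distrib,
      Complex.ofReal_sum]
    refine Finset.sum_congr rfl fun i _ => ?_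
    have e1 : Q₁ = ((1:ℂ) - (starRingEnd ℂ) (a i)) *
        ∏ j ∈ Finset.univ.erase i, ((1:ℂ) - (starRingEnd ℂ) (a j)) := by
      rw [hQ₁def]
      exact (Finset.mul_prod_erase _ _ (Finset.mem_univ i)).symm
    have e2 : P₁ = ((1:ℂ) - a i) * ∏ j ∈ Finset.univ.erase i, ((1:ℂ) - a j) := by
      rw [hP₁def]
      exact (Finset.mul_prod_erase _ _ (Finset.mem_univ i)).symm
    have e3 : (∏ j ∈ Finset.univ.erase i, ((1:ℂ) - a j)) *
        (∏ j ∈ Finset.univ.erase i, ((1:ℂ) - (starRingEnd ℂ) (a j))) =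
        ((∏ j ∈ Finset.univ.erase i, Complex.normSq (1 - a j) : ℝ) : ℂ) := by
      rw [← Finset.prod_mul_distrib, Complex.ofReal_prod]
      refine Finset.prod_congr rfl fun j _ => ?_
      rw [← Complex.mul_conj (1 - a j), map_sub, map_one]
    calc (∏ j ∈ Finset.univ.erase i, ((1:ℂ) - a j)) * Q₁ -
        P₁ * ((∏ j ∈ Finset.univ.erase i, ((1:ℂ) - (starRingEnd ℂ) (a j))) *
          (-((starRingEnd ℂ) (a i))))
        = ((1:ℂ) - a i * (starRingEnd ℂ) (a i)) *
          ((∏ j ∈ Finset.univ.erase i, ((1:ℂ) - a j)) *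
           (∏ j ∈ Finset.univ.erase i, ((1:ℂ) - (starRingEnd ℂ) (a j)))) := by
          rw [e1, e2]; ring
      _ = _ := by
          rw [Complex.mul_conj, e3]; push_cast; ring
  have hDne : lam * ((P' * Q₁ - P₁ * Q') / Q₁ ^ 2) ≠ 0 := by
    apply mul_ne_zero hlam0
    apply div_ne_zero
    · rw [hNval]
      exact_mod_cast (blaschke_aux_sum_pos hd a ha).ne'
    · exact pow_ne_zero 2 hQ1ne'
  -- local injectivity at 1
  have hgB := (hstrict.hasStrictFDerivAt_equiv hDne).eventually_left_inverse
  have htends : Filter.Tendsto h (nhds (1:ℂ)) (nhds (1:ℂ)) := by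
    have := (hhdiff 1 hrs).continuousAt
    rwa [ContinuousAt, hone] at this
  have hev_id : ∀ᶠ z in nhds (1:ℂ), h z = z := by
    filter_upwards [hgB, htends.eventually hgB, heq1] with z h1 h2 h3
    rw [← h2, h3, h1]
  obtain ⟨δ, hδ, hid⟩ := Metric.eventually_nhds_iff.1 hev_id
  -- conclude that h is the identity Möbius transformation
  have key : ∀ z : ℂ, h z = z → z ≠ 0 → p * z + q = z * (r * z + s) := by
    intro z hz hz0
    rcases eq_or_ne (r * z + s) 0 with h0 | h0
    · rw [hh z, h0, div_zero] at hz
      exact absurd hz.symm hz0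
    · rw [hh z, div_eq_iff h0] at hz
      exact hz
  set t : ℝ := min δ 1 / 2 with htdef
  have htpos : 0 < t := by positivity
  have htδ : t < δ := by
    have := min_le_left δ 1
    have h2 : 0 < min δ 1 := lt_min hδ one_pos
    linarith [min_le_left δ 1]
  have ht1 : t ≤ 1/2 := by
    have := min_le_right δ 1
    linarith
  have hT : ((t:ℝ) : ℂ) ≠ 0 := Complex.ofReal_ne_zero.2 htpos.ne'
  have hd1 : dist (1:ℂ) 1 < δ := by simpa using hδ
  have hd2 : dist ((1:ℂ) + (t:ℂ)) 1 < δ := by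
    rw [Complex.dist_eq]
    have : (1:ℂ) + (t:ℂ) - 1 = ((t:ℝ) : ℂ) := by ring
    rw [this, Complex.norm_real, Real.norm_eq_abs, abs_of_pos htpos]
    exact htδ
  have hd3 : dist ((1:ℂ) - (t:ℂ)) 1 < δ := by
    rw [Complex.dist_eq]
    have : (1:ℂ) - (t:ℂ) - 1 = ((-t : ℝ) : ℂ) := by push_cast; ring
    rw [this, Complex.norm_real, Real.norm_eq_abs, abs_of_neg (by linarith)]
    simpa using htδ
  have hz2ne : (1:ℂ) + (t:ℂ) ≠ 0 := by
    intro h0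
    have := congrArg Complex.re h0
    simp at this
    linarith
  have hz3ne : (1:ℂ) - (t:ℂ) ≠ 0 := by
    intro h0
    have := congrArg Complex.re h0
    simp [sub_eq_zero] at this
    linarith
  have e1 : p * 1 + q = 1 * (r * 1 + s) := key 1 (hid hd1) one_ne_zero
  have e2 : p * ((1:ℂ) + (t:ℂ)) + q = ((1:ℂ) + (t:ℂ)) * (r * ((1:ℂ) + (t:ℂ)) + s) :=
    key _ (hid hd2) hz2ne
  have e3 : p * ((1:ℂ) - (t:ℂ)) + q = ((1:ℂ) - (t:ℂ)) * (r * ((1:ℂ) - (t:ℂ)) + s) :=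
    key _ (hid hd3) hz3ne
  have hr : r = 0 := by
    have h2 : 2 * ((t:ℝ):ℂ)^2 * r = 0 := by linear_combination 2 * e1 - e2 - e3
    have h3 : ((t:ℝ):ℂ)^2 ≠ 0 := pow_ne_zero 2 hT
    by_contra hr0
    exact (mul_ne_zero (mul_ne_zero two_ne_zero h3) hr0) h2
  have hps : p = s := by
    have h2 : 2 * ((t:ℝ):ℂ) * (p - s) = 0 := by
      linear_combination e2 - e3 + 4 * ((t:ℝ):ℂ) * hr
    have h3 : p - s = 0 := by
      by_contra hps0
      exact (mul_ne_zero (mul_ne_zero two_ne_zero hT) hps0) h2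
    exact sub_eq_zero.1 h3
  have hq : q = 0 := by linear_combination e1 - hps + hr
  have hp0 : p ≠ 0 := by
    intro h0
    apply hdet
    rw [hq, hr, h0]
    ring
  intro z
  rw [hh z, hr, hq, ← hps, zero_mul, add_zero, zero_add, mul_comm, mul_div_assoc,
    div_self hp0, mul_one]
end
end
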